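/- Let {ξ_j : j ∈ ℤ} be identically distributed, α ∈ (0,1], r ∈ (0,1] with r < α, and suppose E(ξ₁²1{|ξ₁|≤x}) is regularly varying with index 2−α, b_n → ∞ with limsup_n n b_n^{−2}E(ξ₁²1{|ξ₁|≤b_n}) < ∞, and Σ_{k∈ℤ}|a_k|^r < ∞. Then for every δ > 0 and T > 0, limsup_{n→∞} P(max_{1≤l≤[nT]} |b_n^{−1} Σ_{j=1}^l Σ_{|k|>m} a_k ξ_{j−k} 1{|ξ_{j−k}| > b_n}| > δ) ≤ C_3 · Σ_{|k|>m} |a_k|^r for a constant C_3 independent of m. -/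

import Mathlib

open MeasureTheory Filter Set ProbabilityTheory
open scoped ENNReal NNReal

/-- `L` is slowly varying at infinity. -/
def SlowlyVarying (L : ℝ → ℝ) : Prop :=
  (∀ x > 0, 0 < L x) ∧ ∀ s > 0, Tendsto (fun x => L (s * x) / L x) atTop (nhds 1)

lemma tpn_finset_rpow_sum_le {ι : Type*} (s : Finset ι) (f : ι → ℝ≥0∞) {p : ℝ}
    (hp0 : 0 < p) (hp1 : p ≤ 1) : (∑ i ∈ s, f i) ^ p ≤ ∑ i ∈ s, f i ^ p := by
  classical
  induction s using Finset.cons_induction with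
  | empty => simp [ENNReal.zero_rpow_of_pos hp0]
  | cons a s ha ih =>
    rw [Finset.sum_cons, Finset.sum_cons]
    exact (ENNReal.rpow_add_le_add_rpow _ _ hp0.le hp1).trans (add_le_add le_rfl ih)

lemma tpn_tsum_rpow_le {ι : Type*} (f : ι → ℝ≥0∞) {p : ℝ}
    (hp0 : 0 < p) (hp1 : p ≤ 1) : (∑' i, f i) ^ p ≤ ∑' i, f i ^ p := by
  have key : ∀ s : Finset ι, (∑ i ∈ s, f i) ^ p ≤ ∑' i, f i ^ p :=
    fun s => (tpn_finset_rpow_sum_le s f hp0 hp1).trans (ENNReal.sum_le_tsum s)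
  rw [ENNReal.tsum_eq_iSup_sum]
  have hiso := (ENNReal.orderIsoRpow p hp0).map_iSup (fun s : Finset ι => ∑ i ∈ s, f i)
  simp only [ENNReal.orderIsoRpow_apply] at hiso
  rw [hiso]
  exact iSup_le key

lemma tpn_tsum_abs_bound {ι : Type*} [Countable ι] (g : ι → ℝ) {p : ℝ}
    (hp0 : 0 < p) (hp1 : p ≤ 1) :
    (ENNReal.ofReal |∑' k, g k|) ^ p ≤ ∑' k, ENNReal.ofReal (|g k| ^ p) := by
  by_cases hs : Summable g
  · have habs : Summable (fun k => |g k|) := summable_abs_iff.mpr hs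
    have h1 : |∑' k, g k| ≤ ∑' k, |g k| := by
      have := norm_tsum_le_tsum_norm (f := g) (by simpa using habs)
      simpa using this
    calc (ENNReal.ofReal |∑' k, g k|) ^ p
        ≤ (ENNReal.ofReal (∑' k, |g k|)) ^ p :=
          ENNReal.rpow_le_rpow (ENNReal.ofReal_le_ofReal h1) hp0.le
      _ = (∑' k, ENNReal.ofReal |g k|) ^ p := by
          rw [ENNReal.ofReal_tsum_of_nonneg (fun k => abs_nonneg _) habs]
      _ ≤ ∑' k, (ENNReal.ofReal |g k|) ^ p := tpn_tsum_rpow_le _ hp0 hp1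
      _ = ∑' k, ENNReal.ofReal (|g k| ^ p) :=
          tsum_congr fun k => ENNReal.ofReal_rpow_of_nonneg (abs_nonneg _) hp0.le
  · rw [tsum_eq_zero_of_not_summable hs]
    simp [ENNReal.zero_rpow_of_pos hp0]

lemma tpn_trunc_integrable {Ω : Type*} [MeasurableSpace Ω] (μ : Measure Ω)
    [IsProbabilityMeasure μ] (f : Ω → ℝ) (hf : Measurable f) (y : ℝ) :
    Integrable (fun ω => if |f ω| ≤ y then (f ω) ^ 2 else 0) μ := by
  have hm : Measurable (fun ω => if |f ω| ≤ y then (f ω) ^ 2 else 0) :=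
    Measurable.ite (measurableSet_le hf.abs measurable_const) (hf.pow_const 2) measurable_const
  refine (integrable_const (y ^ 2)).mono' hm.aestronglyMeasurable ?_
  refine Eventually.of_forall fun ω => ?_
  by_cases h : |f ω| ≤ y
  · simp only [h, if_true]
    rw [Real.norm_eq_abs, abs_of_nonneg (sq_nonneg _), ← sq_abs]
    have h0 : (0:ℝ) ≤ |f ω| := abs_nonneg _
    nlinarith
  · simp [h, sq_nonneg]

lemma tpn_tail_moment_bound {Ω : Type*} [MeasurableSpace Ω] (μ : Measure Ω)
    [IsProbabilityMeasure μ] (f : Ω → ℝ) (hf : Measurable f) {r : ℝ}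
    (hr0 : 0 < r) (hr2 : r < 2) (V : ℝ → ℝ)
    (hV : ∀ y, V y = ∫ ω, (if |f ω| ≤ y then (f ω) ^ 2 else 0) ∂μ)
    {K θ x₀ : ℝ} (hθ0 : 0 < θ) (hθ1 : θ < 1) (hKθ : (2:ℝ) ^ (r - 2) * K = θ) (hx₀ : 0 < x₀)
    (hVK : ∀ x, x₀ ≤ x → V (2 * x) ≤ K * V x) (hVpos : ∀ x, x₀ ≤ x → 0 ≤ V x) :
    ∀ x, x₀ ≤ x → (∫⁻ ω, (if x < |f ω| then ENNReal.ofReal (|f ω| ^ r) else 0) ∂μ)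
      ≤ ENNReal.ofReal ((K * (1 - θ)⁻¹) * (x ^ (r - 2) * V x)) := by
  intro x hx
  have hxpos : 0 < x := lt_of_lt_of_le hx₀ hx
  have h2r : (0:ℝ) < (2:ℝ) ^ (r - 2) := Real.rpow_pos_of_pos two_pos _
  have hK : 0 < K := by
    have : K = θ / (2:ℝ) ^ (r - 2) := (eq_div_iff h2r.ne').mpr (by rw [mul_comm]; exact hKθ)
    rw [this]; positivity
  have hiter : ∀ i : ℕ, ∀ y, x₀ ≤ y → V (2 ^ (i+1) * y) ≤ K ^ (i+1) * V y := by
    intro i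
    induction i with
    | zero => intro y hy; simpa using hVK y hy
    | succ i ih =>
      intro y hy
      have h2y : x₀ ≤ 2 * y := le_trans hy (by nlinarith [lt_of_lt_of_le hx₀ hy])
      have h1 : V (2 ^ (i+2) * y) = V (2 ^ (i+1) * (2 * y)) := by ring_nf
      rw [h1]
      calc V (2 ^ (i+1) * (2 * y)) ≤ K ^ (i+1) * V (2 * y) := ih (2*y) h2y
        _ ≤ K ^ (i+1) * (K * V y) := by
            exact mul_le_mul_of_nonneg_left (hVK y hy) (by positivity)
        _ = K ^ (i+2) * V y := by ring
  set g : ℕ → Ω → ℝ≥0∞ := fun i ω =>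
    ENNReal.ofReal ((2 ^ i * x) ^ (r - 2)) *
      ENNReal.ofReal (if |f ω| ≤ 2 ^ (i+1) * x then (f ω) ^ 2 else 0) with hg
  have hpt : ∀ ω, (if x < |f ω| then ENNReal.ofReal (|f ω| ^ r) else 0) ≤ ∑' i, g i ω := by
    intro ω
    by_cases h : x < |f ω|
    · simp only [h, if_true]
      have hex : ∃ i : ℕ, |f ω| ≤ 2 ^ (i+1) * x := by
        obtain ⟨i, hi⟩ := pow_unbounded_of_one_lt (|f ω| / x) (one_lt_two (α := ℝ))
        rw [div_lt_iff₀ hxpos] at hi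
        have h2 : (2:ℝ) ^ i ≤ 2 ^ (i+1) := pow_le_pow_right₀ one_le_two (Nat.le_succ i)
        exact ⟨i, le_trans hi.le (mul_le_mul_of_nonneg_right h2 hxpos.le)⟩
      classical
      set i₀ := Nat.find hex with hi₀
      have hub : |f ω| ≤ 2 ^ (i₀+1) * x := Nat.find_spec hex
      have hlb : 2 ^ i₀ * x < |f ω| := by
        rcases Nat.eq_zero_or_pos i₀ with h0 | h0
        · simpa [h0] using h
        · have := Nat.find_min hex (m := i₀ - 1) (by omega)
          push_neg at this
          have : 2 ^ (i₀ - 1 + 1) * x < |f ω| := this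
          rwa [Nat.sub_add_cancel h0] at this
      refine le_trans ?_ (ENNReal.le_tsum i₀)
      have hfpos : 0 < |f ω| := lt_trans hxpos h
      have hfe : |f ω| ^ r ≤ (2 ^ i₀ * x) ^ (r - 2) * (f ω) ^ 2 := by
        have h1 : |f ω| ^ r = |f ω| ^ (r - 2) * |f ω| ^ (2:ℝ) := by
          rw [← Real.rpow_add hfpos]; ring_nf
        have h2 : |f ω| ^ (2:ℝ) = (f ω) ^ 2 := by
          rw [Real.rpow_two, sq_abs]
        have h3 : |f ω| ^ (r - 2) ≤ (2 ^ i₀ * x) ^ (r - 2) := by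
          apply Real.rpow_le_rpow_of_nonpos (by positivity) hlb.le (by linarith)
        rw [h1, h2]
        exact mul_le_mul_of_nonneg_right h3 (sq_nonneg _)
      rw [hg]
      simp only [hub, if_true]
      rw [← ENNReal.ofReal_mul (by positivity)]
      exact ENNReal.ofReal_le_ofReal hfe
    · simp [h]
  have hgmeas : ∀ i, Measurable (g i) := by
    intro i
    exact (measurable_const.mul ((Measurable.ite
      (measurableSet_le hf.abs measurable_const) (hf.pow_const 2)
      measurable_const).ennreal_ofReal))
  calc (∫⁻ ω, (if x < |f ω| then ENNReal.ofReal (|f ω| ^ r) else 0) ∂μ)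
      ≤ ∫⁻ ω, ∑' i, g i ω ∂μ := lintegral_mono hpt
    _ = ∑' i, ∫⁻ ω, g i ω ∂μ := lintegral_tsum (fun i => (hgmeas i).aemeasurable)
    _ ≤ ENNReal.ofReal ((K * (1 - θ)⁻¹) * (x ^ (r - 2) * V x)) := by
        have hstep : ∀ i : ℕ, (∫⁻ ω, g i ω ∂μ)
            ≤ ENNReal.ofReal ((K * (x ^ (r-2) * V x)) * θ ^ i) := by
          intro i
          rw [hg]
          simp only
          rw [lintegral_const_mul _ ((Measurable.ite
            (measurableSet_le hf.abs measurable_const) (hf.pow_const 2)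
            measurable_const).ennreal_ofReal)]
          rw [← ofReal_integral_eq_lintegral_ofReal (tpn_trunc_integrable μ f hf _)
            (Eventually.of_forall fun ω => by by_cases h : |f ω| ≤ 2 ^ (i+1) * x <;>
              simp [h, sq_nonneg])]
          rw [← hV]
          rw [← ENNReal.ofReal_mul (by positivity)]
          apply ENNReal.ofReal_le_ofReal
          have hVi : V (2 ^ (i+1) * x) ≤ K ^ (i+1) * V x := hiter i x hx
          have hpow : (2 ^ i * x) ^ (r - 2) = ((2:ℝ) ^ (r-2)) ^ i * x ^ (r-2) := by
            rw [Real.mul_rpow (by positivity) hxpos.le, ← Real.rpow_natCast (2:ℝ) i,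
              ← Real.rpow_mul (by norm_num), ← Real.rpow_natCast ((2:ℝ) ^ (r-2)) i,
              ← Real.rpow_mul (by positivity)]
            ring_nf
          calc (2 ^ i * x) ^ (r - 2) * V (2 ^ (i+1) * x)
              ≤ (2 ^ i * x) ^ (r - 2) * (K ^ (i+1) * V x) := by
                apply mul_le_mul_of_nonneg_left hVi (by positivity)
            _ = (K * (x ^ (r-2) * V x)) * ((2:ℝ) ^ (r-2) * K) ^ i := by
                rw [hpow, mul_pow]; ring
            _ = (K * (x ^ (r-2) * V x)) * θ ^ i := by rw [hKθ]
        calc (∑' i, ∫⁻ ω, g i ω ∂μ)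
            ≤ ∑' i : ℕ, ENNReal.ofReal ((K * (x ^ (r-2) * V x)) * θ ^ i) :=
              ENNReal.tsum_le_tsum hstep
          _ = ENNReal.ofReal (K * (x ^ (r-2) * V x)) * ∑' i : ℕ, (ENNReal.ofReal θ) ^ i := by
              have hc : (0:ℝ) ≤ K * (x ^ (r-2) * V x) := by
                have := hVpos x hx
                positivity
              have heq : ∀ i : ℕ, ENNReal.ofReal ((K * (x ^ (r-2) * V x)) * θ ^ i) =
                  ENNReal.ofReal (K * (x ^ (r-2) * V x)) * (ENNReal.ofReal θ) ^ i := fun i => by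
                rw [ENNReal.ofReal_mul hc, ENNReal.ofReal_pow hθ0.le]
              simp_rw [heq]
              rw [ENNReal.tsum_mul_left]
          _ = ENNReal.ofReal ((K * (1 - θ)⁻¹) * (x ^ (r - 2) * V x)) := by
              have hc : (0:ℝ) ≤ K * (x ^ (r-2) * V x) := by
                have := hVpos x hx
                positivity
              rw [ENNReal.tsum_geometric]
              have h1 : (1:ℝ≥0∞) - ENNReal.ofReal θ = ENNReal.ofReal (1 - θ) := by
                rw [ENNReal.ofReal_sub 1 hθ0.le, ENNReal.ofReal_one]
              rw [h1, ← ENNReal.ofReal_inv_of_pos (by linarith), ← ENNReal.ofReal_mul hc]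
              congr 1
              ring

lemma tpn_ratio_limit (V ℓ : ℝ → ℝ) (α : ℝ) (hℓ : SlowlyVarying ℓ)
    (hreg : Tendsto (fun x => V x / (x ^ (2 - α) * ℓ x)) atTop (nhds 1)) :
    Tendsto (fun x => V (2 * x) / V x) atTop (nhds ((2:ℝ) ^ (2 - α))) := by
  set g : ℝ → ℝ := fun x => V x / (x ^ (2 - α) * ℓ x) with hgdef
  have h2x : Tendsto (fun x : ℝ => 2 * x) atTop atTop :=
    Tendsto.const_mul_atTop two_pos tendsto_id
  have hg2 : Tendsto (fun x => g (2 * x)) atTop (nhds 1) := hreg.comp h2x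
  have hℓ2 : Tendsto (fun x => ℓ (2 * x) / ℓ x) atTop (nhds 1) := hℓ.2 2 two_pos
  have htends : Tendsto (fun x => (g (2 * x) / g x) * ((2:ℝ) ^ (2 - α) * (ℓ (2 * x) / ℓ x)))
      atTop (nhds ((2:ℝ) ^ (2 - α))) := by
    have h1 : Tendsto (fun x => (2:ℝ) ^ (2 - α) * (ℓ (2 * x) / ℓ x)) atTop
        (nhds ((2:ℝ) ^ (2 - α) * 1)) := (tendsto_const_nhds (x := (2:ℝ) ^ (2 - α))).mul hℓ2
    have := (hg2.div hreg one_ne_zero).mul h1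
    simpa using this
  refine htends.congr' ?_
  have hgev : ∀ᶠ x in atTop, (1:ℝ)/2 < g x := hreg.eventually_const_lt (by norm_num)
  have hgev2 : ∀ᶠ x in atTop, (1:ℝ)/2 < g (2 * x) := h2x.eventually hgev
  filter_upwards [hgev, hgev2, eventually_gt_atTop 0] with x hgx hg2x hx0
  have hℓx : 0 < ℓ x := hℓ.1 x hx0
  have hℓ2x : 0 < ℓ (2 * x) := hℓ.1 _ (by linarith)
  have hxr : (0:ℝ) < x ^ (2 - α) := Real.rpow_pos_of_pos hx0 _
  have h2xr : ((2:ℝ) * x) ^ (2 - α) = (2:ℝ) ^ (2 - α) * x ^ (2 - α) :=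
    Real.mul_rpow (by norm_num) hx0.le
  have hVx : V x = g x * (x ^ (2 - α) * ℓ x) := by
    rw [hgdef]; field_simp
  have hV2x : V (2 * x) = g (2 * x) * ((2 * x) ^ (2 - α) * ℓ (2 * x)) := by
    rw [hgdef]; field_simp
  rw [hVx, hV2x, h2xr]
  have hgx0 : g x ≠ 0 := by positivity
  field_simp

theorem tail_part_negligible_alpha_le_one
    {Ω : Type*} [MeasurableSpace Ω] (μ : Measure Ω) [IsProbabilityMeasure μ]
    (ξ : ℤ → Ω → ℝ) (hmeas : ∀ j, Measurable (ξ j))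
    (hid : ∀ j : ℤ, IdentDistrib (ξ j) (ξ 1) μ μ)
    (α : ℝ) (hα : α ∈ Set.Ioc (0:ℝ) 1) (r : ℝ) (hr : r ∈ Set.Ioc (0:ℝ) 1) (hrα : r < α)
    (ℓ : ℝ → ℝ) (hℓ : SlowlyVarying ℓ)
    (hreg : Tendsto
      (fun x => (∫ ω, (if |ξ 1 ω| ≤ x then (ξ 1 ω) ^ 2 else 0) ∂μ) / (x ^ (2 - α) * ℓ x))
      atTop (nhds 1))
    (b : ℕ → ℝ) (hbpos : ∀ n, 0 < b n) (hb : Tendsto b atTop atTop)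
    (hbound : IsBoundedUnder (· ≤ ·) atTop
      (fun n : ℕ => (n : ℝ) * (b n) ^ (-(2:ℝ)) *
        ∫ ω, (if |ξ 1 ω| ≤ b n then (ξ 1 ω) ^ 2 else 0) ∂μ))
    (a : ℤ → ℝ) (ha : Summable (fun k : ℤ => |a k| ^ r)) :
    ∀ δ : ℝ, 0 < δ → ∀ T : ℝ, 0 < T → ∃ C : ℝ, ∀ m : ℕ,
      Filter.limsup (fun n : ℕ =>
        (μ {ω | ∃ l, 1 ≤ l ∧ l ≤ ⌊(n : ℝ) * T⌋₊ ∧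
          δ < |(b n)⁻¹ * ∑ j ∈ Finset.Icc 1 l, ∑' k : {k : ℤ // (m : ℤ) < |k|},
            a k * (if b n < |ξ ((j : ℤ) - k) ω| then ξ ((j : ℤ) - k) ω else 0)|}).toReal)
        atTop ≤ C * ∑' k : {k : ℤ // (m : ℤ) < |k|}, |a k| ^ r := by
  obtain ⟨hα0, hα1⟩ := hα
  obtain ⟨hr0, hr1⟩ := hr
  intro δ hδ T hT
  -- constants
  have h2ra0 : (0:ℝ) < (2:ℝ) ^ (r - α) := Real.rpow_pos_of_pos two_pos _
  have h2ra1 : (2:ℝ) ^ (r - α) < 1 :=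
    Real.rpow_lt_one_of_one_lt_of_neg one_lt_two (by linarith)
  set θ : ℝ := (1 + (2:ℝ) ^ (r - α)) / 2 with hθdef
  have hθ0 : 0 < θ := by rw [hθdef]; linarith
  have hθ1 : θ < 1 := by rw [hθdef]; linarith
  have hθgt : (2:ℝ) ^ (r - α) < θ := by rw [hθdef]; linarith
  set K : ℝ := θ * (2:ℝ) ^ ((2:ℝ) - r) with hKdef
  have h22r : (0:ℝ) < (2:ℝ) ^ ((2:ℝ) - r) := Real.rpow_pos_of_pos two_pos _
  have hK0 : 0 < K := by rw [hKdef]; positivity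
  have hKθ : (2:ℝ) ^ (r - 2) * K = θ := by
    rw [hKdef, ← mul_assoc, mul_comm ((2:ℝ) ^ (r-2)) θ, mul_assoc, ← Real.rpow_add two_pos]
    norm_num
  have hK2α : (2:ℝ) ^ ((2:ℝ) - α) < K := by
    have h1 : (2:ℝ) ^ ((2:ℝ) - α) = (2:ℝ) ^ (r - α) * (2:ℝ) ^ ((2:ℝ) - r) := by
      rw [← Real.rpow_add two_pos]; ring_nf
    rw [h1, hKdef]
    exact mul_lt_mul_of_pos_right hθgt h22r
  set V : ℝ → ℝ := fun y => ∫ ω, (if |ξ 1 ω| ≤ y then (ξ 1 ω) ^ 2 else 0) ∂μ with hVdef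
  have hVnonneg : ∀ y, 0 ≤ V y := by
    intro y
    apply integral_nonneg
    intro ω
    by_cases h : |ξ 1 ω| ≤ y <;> simp [h, sq_nonneg]
  have hVlim : Tendsto (fun x => V (2 * x) / V x) atTop (nhds ((2:ℝ) ^ (2 - α))) :=
    tpn_ratio_limit V ℓ α hℓ hreg
  -- eventual positivity of V
  have hVev : ∀ᶠ x in atTop, 0 < V x := by
    have hgev : ∀ᶠ x in atTop,
        (1:ℝ)/2 < V x / (x ^ (2 - α) * ℓ x) := hreg.eventually_const_lt (by norm_num)
    filter_upwards [hgev, eventually_gt_atTop 0] with x hgx hx0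
    have hℓx : 0 < ℓ x := hℓ.1 x hx0
    have hxr : (0:ℝ) < x ^ (2 - α) := Real.rpow_pos_of_pos hx0 _
    have h2 : 0 < V x / (x ^ (2 - α) * ℓ x) := lt_trans (by norm_num) hgx
    rcases div_pos_iff.mp h2 with ⟨h3, _⟩ | ⟨_, h4⟩
    · exact h3
    · exact absurd h4 (not_lt.mpr (le_of_lt (by positivity)))
  have hVKev : ∀ᶠ x in atTop, V (2 * x) ≤ K * V x ∧ 0 < V x := by
    have h1 : ∀ᶠ x in atTop, V (2 * x) / V x < K := by
      have : ((2:ℝ) ^ ((2:ℝ) - α)) < K := hK2α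
      exact hVlim.eventually_lt_const this
    filter_upwards [h1, hVev] with x h1x h2x
    refine ⟨?_, h2x⟩
    have : V (2 * x) = V (2 * x) / V x * V x := (div_mul_cancel₀ _ h2x.ne').symm
    rw [this]
    exact mul_le_mul_of_nonneg_right h1x.le h2x.le
  obtain ⟨x₀, hx₀⟩ := eventually_atTop.mp hVKev
  set x₁ : ℝ := max x₀ 1 with hx₁def
  have hx₁pos : 0 < x₁ := lt_of_lt_of_le one_pos (le_max_right _ _)
  have hVK : ∀ x, x₁ ≤ x → V (2 * x) ≤ K * V x :=
    fun x hx => (hx₀ x (le_trans (le_max_left _ _) hx)).1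
  have hr2 : r < 2 := by linarith
  have htail := tpn_tail_moment_bound μ (ξ 1) (hmeas 1) hr0 hr2 V (fun y => rfl)
    hθ0 hθ1 hKθ hx₁pos hVK (fun x hx => (hVnonneg x))
  set C₁ : ℝ := K * (1 - θ)⁻¹ with hC₁def
  have h1θ : 0 < 1 - θ := by linarith
  have hC₁0 : 0 < C₁ := by rw [hC₁def]; positivity
  obtain ⟨M₀, hM₀⟩ := hbound
  rw [eventually_map] at hM₀
  have hδr : (0:ℝ) < δ ^ r := Real.rpow_pos_of_pos hδ _
  refine ⟨T * (C₁ * max M₀ 0) / δ ^ r, fun m => ?_⟩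
  set S : ℝ := ∑' k : {k : ℤ // (m : ℤ) < |k|}, |a k| ^ r with hSdef
  have hSsum : Summable (fun k : {k : ℤ // (m : ℤ) < |k|} => |a (k:ℤ)| ^ r) :=
    ha.subtype _
  have hS0 : 0 ≤ S := tsum_nonneg fun k => Real.rpow_nonneg (abs_nonneg _) _
  -- the eventual bound
  have hev2 : ∀ᶠ n : ℕ in atTop, (μ {ω | ∃ l, 1 ≤ l ∧ l ≤ ⌊(n : ℝ) * T⌋₊ ∧
        δ < |(b n)⁻¹ * ∑ j ∈ Finset.Icc 1 l, ∑' k : {k : ℤ // (m : ℤ) < |k|},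
          a k * (if b n < |ξ ((j : ℤ) - k) ω| then ξ ((j : ℤ) - k) ω else 0)|}).toReal
      ≤ (T * (C₁ * max M₀ 0) / δ ^ r) * S := by
    filter_upwards [hb.eventually_ge_atTop x₁, hM₀] with n hbn hMn
    have hbnpos : 0 < b n := hbpos n
    set L : ℕ := ⌊(n : ℝ) * T⌋₊ with hLdef
    have hmeas_if : ∀ i : ℤ, Measurable (fun ω =>
        (if b n < |ξ i ω| then ENNReal.ofReal (|ξ i ω| ^ r) else 0)) := fun i =>
      Measurable.ite (measurableSet_lt measurable_const (hmeas i).abs)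
        (((continuous_abs.rpow_const (fun _ => Or.inr hr0.le)).measurable.comp
          (hmeas i)).ennreal_ofReal) measurable_const
    set Y : Ω → ℝ≥0∞ := fun ω => ∑ j ∈ Finset.Icc 1 L, ∑' k : {k : ℤ // (m : ℤ) < |k|},
      ENNReal.ofReal (|a k| ^ r) *
        (if b n < |ξ ((j : ℤ) - k) ω| then ENNReal.ofReal (|ξ ((j : ℤ) - k) ω| ^ r) else 0)
      with hYdef
    have hYmeas : Measurable Y := by
      apply Finset.measurable_sum
      intro j _
      exact Measurable.ennreal_tsum fun k => measurable_const.mul (hmeas_if _)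
    have hsub : {ω | ∃ l, 1 ≤ l ∧ l ≤ L ∧
          δ < |(b n)⁻¹ * ∑ j ∈ Finset.Icc 1 l, ∑' k : {k : ℤ // (m : ℤ) < |k|},
            a k * (if b n < |ξ ((j : ℤ) - k) ω| then ξ ((j : ℤ) - k) ω else 0)|}
        ⊆ {ω | ENNReal.ofReal (δ ^ r * b n ^ r) ≤ Y ω} := by
      rintro ω ⟨l, hl1, hl2, hδl⟩
      simp only [Set.mem_setOf_eq]
      set t : ℕ → ℝ := fun j => ∑' k : {k : ℤ // (m : ℤ) < |k|},
        a k * (if b n < |ξ ((j : ℤ) - k) ω| then ξ ((j : ℤ) - k) ω else 0) with htdef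
      have habs : δ * b n < |∑ j ∈ Finset.Icc 1 l, t j| := by
        have h1 : |(b n)⁻¹ * ∑ j ∈ Finset.Icc 1 l, t j| = |∑ j ∈ Finset.Icc 1 l, t j| / b n := by
          rw [abs_mul, abs_inv, abs_of_pos hbnpos]; ring
        rw [h1] at hδl
        exact (lt_div_iff₀ hbnpos).mp hδl
      calc ENNReal.ofReal (δ ^ r * b n ^ r)
          = (ENNReal.ofReal (δ * b n)) ^ r := by
            rw [ENNReal.ofReal_rpow_of_nonneg (by positivity) hr0.le,
              Real.mul_rpow hδ.le hbnpos.le]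
        _ ≤ (ENNReal.ofReal |∑ j ∈ Finset.Icc 1 l, t j|) ^ r :=
            ENNReal.rpow_le_rpow (ENNReal.ofReal_le_ofReal habs.le) hr0.le
        _ ≤ (∑ j ∈ Finset.Icc 1 l, ENNReal.ofReal |t j|) ^ r := by
            apply ENNReal.rpow_le_rpow _ hr0.le
            calc ENNReal.ofReal |∑ j ∈ Finset.Icc 1 l, t j|
                ≤ ENNReal.ofReal (∑ j ∈ Finset.Icc 1 l, |t j|) :=
                  ENNReal.ofReal_le_ofReal (Finset.abs_sum_le_sum_abs _ _)
              _ = ∑ j ∈ Finset.Icc 1 l, ENNReal.ofReal |t j| :=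
                  ENNReal.ofReal_sum_of_nonneg (fun j _ => abs_nonneg _)
        _ ≤ ∑ j ∈ Finset.Icc 1 l, (ENNReal.ofReal |t j|) ^ r :=
            tpn_finset_rpow_sum_le _ _ hr0 hr1
        _ ≤ ∑ j ∈ Finset.Icc 1 l, ∑' k : {k : ℤ // (m : ℤ) < |k|},
              ENNReal.ofReal (|a k| ^ r) *
                (if b n < |ξ ((j : ℤ) - k) ω| then ENNReal.ofReal (|ξ ((j : ℤ) - k) ω| ^ r)
                  else 0) := by
            apply Finset.sum_le_sum
            intro j _
            refine le_trans (tpn_tsum_abs_bound _ hr0 hr1) (le_of_eq (tsum_congr fun k => ?_))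
            by_cases h : b n < |ξ ((j : ℤ) - k) ω|
            · simp only [h, if_true]
              rw [abs_mul, Real.mul_rpow (abs_nonneg _) (abs_nonneg _),
                ENNReal.ofReal_mul (Real.rpow_nonneg (abs_nonneg _) _)]
            · simp only [h, if_false]
              rw [mul_zero, abs_zero, Real.zero_rpow hr0.ne', ENNReal.ofReal_zero, mul_zero]
        _ ≤ Y ω := Finset.sum_le_sum_of_subset (Finset.Icc_subset_Icc le_rfl hl2)
    set I : ℝ≥0∞ := ∫⁻ ω, (if b n < |ξ 1 ω| then ENNReal.ofReal (|ξ 1 ω| ^ r) else 0) ∂μ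
      with hIdef
    have hid' : ∀ i : ℤ,
        (∫⁻ ω, (if b n < |ξ i ω| then ENNReal.ofReal (|ξ i ω| ^ r) else 0) ∂μ) = I := by
      intro i
      have hφ : Measurable (fun s : ℝ => if b n < |s| then ENNReal.ofReal (|s| ^ r) else 0) :=
        Measurable.ite (measurableSet_lt measurable_const measurable_abs)
          ((continuous_abs.rpow_const (fun _ => Or.inr hr0.le)).measurable.ennreal_ofReal)
          measurable_const
      simpa [Function.comp] using ((hid i).comp hφ).lintegral_eq
    have hSe : (∑' k : {k : ℤ // (m : ℤ) < |k|}, ENNReal.ofReal (|a (k:ℤ)| ^ r))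
        = ENNReal.ofReal S := by
      rw [hSdef, ENNReal.ofReal_tsum_of_nonneg (fun k => Real.rpow_nonneg (abs_nonneg _) _) hSsum]
    have hlint : (∫⁻ ω, Y ω ∂μ) = (L : ℝ≥0∞) * (ENNReal.ofReal S * I) := by
      rw [hYdef]
      beta_reduce
      rw [lintegral_finset_sum _
        (fun (j : ℕ) _ => (Measurable.ennreal_tsum fun k => measurable_const.mul (hmeas_if _) :
          Measurable (fun ω => ∑' k : {k : ℤ // (m : ℤ) < |k|}, ENNReal.ofReal (|a k| ^ r) *
            (if b n < |ξ ((j : ℤ) - k) ω| then ENNReal.ofReal (|ξ ((j : ℤ) - k) ω| ^ r)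
              else 0))))]
      have hj : ∀ j ∈ Finset.Icc 1 L,
          (∫⁻ ω, ∑' k : {k : ℤ // (m : ℤ) < |k|},
            ENNReal.ofReal (|a k| ^ r) *
              (if b n < |ξ ((j : ℤ) - k) ω| then ENNReal.ofReal (|ξ ((j : ℤ) - k) ω| ^ r)
                else 0) ∂μ) = ENNReal.ofReal S * I := by
        intro j _
        rw [lintegral_tsum (f := fun (k : {k : ℤ // (m : ℤ) < |k|}) ω => ENNReal.ofReal (|a k| ^ r) *
            (if b n < |ξ ((j : ℤ) - k) ω| then ENNReal.ofReal (|ξ ((j : ℤ) - k) ω| ^ r)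
              else 0)) (fun k => (measurable_const.mul (hmeas_if _)).aemeasurable)]
        have hterm : ∀ k : {k : ℤ // (m : ℤ) < |k|},
            (∫⁻ ω, ENNReal.ofReal (|a (k:ℤ)| ^ r) *
              (if b n < |ξ ((j : ℤ) - k) ω| then ENNReal.ofReal (|ξ ((j : ℤ) - k) ω| ^ r)
                else 0) ∂μ) = ENNReal.ofReal (|a (k:ℤ)| ^ r) * I := fun k => by
          rw [lintegral_const_mul _ (hmeas_if _), hid' _]
        simp_rw [hterm]
        rw [ENNReal.tsum_mul_right, hSe]
      rw [Finset.sum_congr rfl hj, Finset.sum_const, Nat.card_Icc]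
      simp [nsmul_eq_mul]
    have hεpos : (0:ℝ) < δ ^ r * b n ^ r := by
      have := Real.rpow_pos_of_pos hbnpos r
      positivity
    have hne0 : ENNReal.ofReal (δ ^ r * b n ^ r) ≠ 0 := by
      rw [Ne, ENNReal.ofReal_eq_zero, not_le]; exact hεpos
    have hmarkov : μ {ω | ENNReal.ofReal (δ ^ r * b n ^ r) ≤ Y ω}
        ≤ (∫⁻ ω, Y ω ∂μ) / ENNReal.ofReal (δ ^ r * b n ^ r) :=
      meas_ge_le_lintegral_div hYmeas.aemeasurable hne0 ENNReal.ofReal_ne_top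
    have hIle : I ≤ ENNReal.ofReal (C₁ * (b n ^ (r - 2) * V (b n))) := htail (b n) hbn
    set X : ℝ≥0∞ := ((L : ℝ≥0∞) * (ENNReal.ofReal S *
        ENNReal.ofReal (C₁ * (b n ^ (r - 2) * V (b n))))) /
        ENNReal.ofReal (δ ^ r * b n ^ r) with hXdef
    have hμX : μ {ω | ∃ l, 1 ≤ l ∧ l ≤ L ∧
          δ < |(b n)⁻¹ * ∑ j ∈ Finset.Icc 1 l, ∑' k : {k : ℤ // (m : ℤ) < |k|},
            a k * (if b n < |ξ ((j : ℤ) - k) ω| then ξ ((j : ℤ) - k) ω else 0)|} ≤ X := by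
      refine (measure_mono hsub).trans (hmarkov.trans ?_)
      rw [hlint, hXdef]
      gcongr
    have hCb0 : (0:ℝ) ≤ C₁ * (b n ^ (r - 2) * V (b n)) :=
      mul_nonneg hC₁0.le (mul_nonneg (Real.rpow_nonneg hbnpos.le _) (hVnonneg _))
    have hXne : X ≠ ⊤ := by
      rw [hXdef]
      refine (ENNReal.div_lt_top ?_ hne0).ne
      exact ENNReal.mul_ne_top (ENNReal.natCast_ne_top _)
        (ENNReal.mul_ne_top ENNReal.ofReal_ne_top ENNReal.ofReal_ne_top)
    have htR : X.toReal
        = (L:ℝ) * (S * (C₁ * (b n ^ (r - 2) * V (b n)))) / (δ ^ r * b n ^ r) := by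
      rw [hXdef, ENNReal.toReal_div, ENNReal.toReal_mul, ENNReal.toReal_mul,
        ENNReal.toReal_ofReal hS0, ENNReal.toReal_ofReal hCb0,
        ENNReal.toReal_ofReal hεpos.le]
      simp
    calc (μ {ω | ∃ l, 1 ≤ l ∧ l ≤ L ∧
          δ < |(b n)⁻¹ * ∑ j ∈ Finset.Icc 1 l, ∑' k : {k : ℤ // (m : ℤ) < |k|},
            a k * (if b n < |ξ ((j : ℤ) - k) ω| then ξ ((j : ℤ) - k) ω else 0)|}).toReal
        ≤ X.toReal := ENNReal.toReal_mono hXne hμX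
      _ = (L:ℝ) * (S * (C₁ * (b n ^ (r - 2) * V (b n)))) / (δ ^ r * b n ^ r) := htR
      _ ≤ (T * (C₁ * max M₀ 0) / δ ^ r) * S := by
          have hL : (L:ℝ) ≤ (n:ℝ) * T := Nat.floor_le (by positivity)
          have hq : (0:ℝ) < b n ^ (-(2:ℝ)) := Real.rpow_pos_of_pos hbnpos _
          have hp : (0:ℝ) < b n ^ r := Real.rpow_pos_of_pos hbnpos _
          have hsplit : b n ^ (r - 2) = b n ^ r * b n ^ (-(2:ℝ)) := by
            rw [← Real.rpow_add hbnpos]; ring_nf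
          have hMn' : (n:ℝ) * b n ^ (-(2:ℝ)) * V (b n) ≤ max M₀ 0 := by
            refine le_trans ?_ (le_max_left _ _)
            exact hMn
          have key : (L:ℝ) * (b n ^ (-(2:ℝ)) * V (b n)) ≤ T * max M₀ 0 := by
            calc (L:ℝ) * (b n ^ (-(2:ℝ)) * V (b n))
                ≤ ((n:ℝ) * T) * (b n ^ (-(2:ℝ)) * V (b n)) :=
                  mul_le_mul_of_nonneg_right hL (mul_nonneg hq.le (hVnonneg _))
              _ = T * ((n:ℝ) * b n ^ (-(2:ℝ)) * V (b n)) := by ring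
              _ ≤ T * max M₀ 0 := mul_le_mul_of_nonneg_left hMn' hT.le
          have heq : (L:ℝ) * (S * (C₁ * (b n ^ (r - 2) * V (b n)))) / (δ ^ r * b n ^ r)
              = (C₁ / δ ^ r * S) * ((L:ℝ) * (b n ^ (-(2:ℝ)) * V (b n))) := by
            rw [hsplit]; field_simp
          rw [heq]
          calc (C₁ / δ ^ r * S) * ((L:ℝ) * (b n ^ (-(2:ℝ)) * V (b n)))
              ≤ (C₁ / δ ^ r * S) * (T * max M₀ 0) :=
                mul_le_mul_of_nonneg_left key (by positivity)
            _ = (T * (C₁ * max M₀ 0) / δ ^ r) * S := by field_simp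
  exact Filter.limsup_le_of_le
    (Filter.isCoboundedUnder_le_of_le atTop (fun n => ENNReal.toReal_nonneg)) hev2
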